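/- Let ε ∈ (0,1) and define F : ℝ^N → ℝ by F(y) = (ε² + |y|²)^((1+ε)/2), so that its gradient is ∇F(y) = (1+ε) y (ε² + |y|²)^((ε−1)/2). Then there exists a constant c_ε > 0 such that for all y₀, y₁ ∈ ℝ^N, (∇F(y₁) − ∇F(y₀)) · (y₁ − y₀) ≥ c_ε |y₁ − y₀|² / (ε² + |y₁|² + |y₀|²)^((1−ε)/2). -/

import Mathlib

open Set
set_option maxHeartbeats 1000000

lemma scalar_key (ε : ℝ) (hε0 : 0 < ε) (hε1 : ε < 1) {u v : ℝ} (hu : 0 ≤ u) (huv : u ≤ v) :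
    ε * (ε ^ 2 + v ^ 2) ^ ((ε - 1) / 2) * (v - u)
      ≤ v * (ε ^ 2 + v ^ 2) ^ ((ε - 1) / 2) - u * (ε ^ 2 + u ^ 2) ^ ((ε - 1) / 2) := by
  set α : ℝ := (ε - 1) / 2 with hα
  set f : ℝ → ℝ := fun x => x * (ε ^ 2 + x ^ 2) ^ α with hf
  have hd : ∀ x : ℝ, HasDerivAt f
      ((ε ^ 2 + x ^ 2) ^ α + x * (α * (ε ^ 2 + x ^ 2) ^ (α - 1) * (2 * x))) x := by
    intro x
    have hP : (0 : ℝ) < ε ^ 2 + x ^ 2 := by positivity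
    have h1 : HasDerivAt (fun x : ℝ => ε ^ 2 + x ^ 2) (2 * x) x := by
      have := (hasDerivAt_pow 2 x).const_add (ε ^ 2)
      simpa using this
    have h2 : HasDerivAt (fun y : ℝ => y ^ α) (α * (ε ^ 2 + x ^ 2) ^ (α - 1)) (ε ^ 2 + x ^ 2) :=
      Real.hasDerivAt_rpow_const (Or.inl hP.ne')
    have h3 := h2.comp x h1
    have := (hasDerivAt_id x).mul h3
    exact this.congr_deriv (by simp)
  have hdiff : Differentiable ℝ f := fun x => (hd x).differentiableAt
  have hbound : ∀ x ∈ interior (Icc u v), ε * (ε ^ 2 + v ^ 2) ^ α ≤ deriv f x := by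
    intro x hx
    rw [interior_Icc] at hx
    have hx0 : 0 ≤ x := le_trans hu hx.1.le
    have hxv : x ≤ v := hx.2.le
    have hP : (0 : ℝ) < ε ^ 2 + x ^ 2 := by positivity
    have hPv : (0 : ℝ) < ε ^ 2 + v ^ 2 := by positivity
    rw [(hd x).deriv]
    have e1 : (ε ^ 2 + x ^ 2) ^ α = (ε ^ 2 + x ^ 2) ^ (α - 1) * (ε ^ 2 + x ^ 2) := by
      rw [← Real.rpow_add_one hP.ne' (α - 1)]; ring_nf
    have hPm : (0 : ℝ) < (ε ^ 2 + x ^ 2) ^ (α - 1) := Real.rpow_pos_of_pos hP _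
    have key : ε * (ε ^ 2 + x ^ 2) ^ α
        ≤ (ε ^ 2 + x ^ 2) ^ α + x * (α * (ε ^ 2 + x ^ 2) ^ (α - 1) * (2 * x)) := by
      rw [e1]
      have h2 : ε * (ε ^ 2 + x ^ 2) ≤ (ε ^ 2 + x ^ 2) + (2 * α) * x ^ 2 := by
        have : 2 * α = ε - 1 := by rw [hα]; ring
        rw [this]
        nlinarith [sq_nonneg ε, sq_nonneg x]
      nlinarith [hPm, h2]
    refine le_trans ?_ key
    have : (ε ^ 2 + v ^ 2) ^ α ≤ (ε ^ 2 + x ^ 2) ^ α := by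
      apply Real.rpow_le_rpow_of_nonpos hP
      · nlinarith
      · rw [hα]; linarith
    nlinarith [this]
  have := (convex_Icc u v).mul_sub_le_image_sub_of_le_deriv
    hdiff.continuous.continuousOn (hdiff.differentiableOn) hbound
    u (left_mem_Icc.mpr huv) v (right_mem_Icc.mpr huv) huv
  simpa [hf] using this

lemma key_half (N : ℕ) (ε : ℝ) (hε : ε ∈ Ioo (0 : ℝ) 1) (y₀ y₁ : EuclideanSpace ℝ (Fin N))
    (hab : ‖y₀‖ ≤ ‖y₁‖) :
    (inner ℝ
        ((((1 + ε) * (ε ^ 2 + ‖y₁‖ ^ 2) ^ ((ε - 1) / 2)) • y₁)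
          - (((1 + ε) * (ε ^ 2 + ‖y₀‖ ^ 2) ^ ((ε - 1) / 2)) • y₀))
        (y₁ - y₀) : ℝ)
      ≥ ε * ‖y₁ - y₀‖ ^ 2 / (ε ^ 2 + ‖y₁‖ ^ 2 + ‖y₀‖ ^ 2) ^ ((1 - ε) / 2) := by
  obtain ⟨hε0, hε1⟩ := hε
  set a := ‖y₀‖ with ha
  set b := ‖y₁‖ with hb
  set A : ℝ := (ε ^ 2 + a ^ 2) ^ ((ε - 1) / 2) with hA
  set B : ℝ := (ε ^ 2 + b ^ 2) ^ ((ε - 1) / 2) with hB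
  set d := ‖y₁ - y₀‖ with hd
  set S : ℝ := ε ^ 2 + b ^ 2 + a ^ 2 with hS
  have hS0 : (0 : ℝ) < S := by positivity
  have ha0 : 0 ≤ a := norm_nonneg _
  have hd0 : 0 ≤ d := norm_nonneg _
  have hA0 : 0 < A := Real.rpow_pos_of_pos (by positivity) _
  have hB0 : 0 < B := Real.rpow_pos_of_pos (by positivity) _
  -- inner expansion
  have hinner : (inner ℝ
        ((((1 + ε) * B) • y₁) - (((1 + ε) * A) • y₀)) (y₁ - y₀) : ℝ)
      = (1 + ε) * (B * b ^ 2 + A * a ^ 2 - (A + B) * (inner ℝ y₀ y₁ : ℝ)) := by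
    rw [inner_sub_left, real_inner_smul_left, real_inner_smul_left,
      inner_sub_right, inner_sub_right, real_inner_self_eq_norm_sq,
      real_inner_self_eq_norm_sq, real_inner_comm y₁ y₀]
    ring
  have hdsq : d ^ 2 = b ^ 2 - 2 * (inner ℝ y₀ y₁ : ℝ) + a ^ 2 := by
    rw [hd, hb, ha, norm_sub_sq_real, real_inner_comm]
  -- key facts
  have H1 : ε * B * (b - a) ≤ b * B - a * A := scalar_key ε hε0 hε1 ha0 hab
  have H2 : b - a ≤ d := by
    rw [hd]; have := norm_sub_norm_le y₁ y₀; linarith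
  have H3 : B ≤ A := by
    apply Real.rpow_le_rpow_of_nonpos (by positivity)
    · nlinarith
    · linarith
  have H4 : (0:ℝ) < S ^ ((ε - 1) / 2) := Real.rpow_pos_of_pos hS0 _
  have H5 : S ^ ((ε - 1) / 2) ≤ B := by
    apply Real.rpow_le_rpow_of_nonpos (by positivity)
    · rw [hS]; nlinarith [sq_nonneg a]
    · linarith
  -- rewrite RHS
  have hRHS : ε * d ^ 2 / S ^ ((1 - ε) / 2) = ε * d ^ 2 * S ^ ((ε - 1) / 2) := by
    have : ((ε - 1) / 2 : ℝ) = -((1 - ε) / 2) := by ring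
    rw [this, Real.rpow_neg hS0.le, div_eq_mul_inv]
  rw [hinner, hRHS]
  -- main chain
  have step1 : (A - B) * (b ^ 2 - a ^ 2) ≤ (A + B - 2 * ε * B) * d ^ 2 := by
    have e1 : (A - B) * (b ^ 2 - a ^ 2) = ((A + B) * (b - a) - 2 * (b * B - a * A)) * (b - a) := by
      ring
    have e2 : ((A + B) * (b - a) - 2 * (b * B - a * A)) * (b - a)
        ≤ (A + B - 2 * ε * B) * (b - a) * (b - a) := by
      have hba : 0 ≤ b - a := by linarith
      have : (A + B) * (b - a) - 2 * (b * B - a * A) ≤ (A + B - 2 * ε * B) * (b - a) := by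
        nlinarith [H1]
      exact mul_le_mul_of_nonneg_right this hba
    have hcoef : 0 ≤ A + B - 2 * ε * B := by nlinarith
    have e3 : (A + B - 2 * ε * B) * (b - a) * (b - a) ≤ (A + B - 2 * ε * B) * d ^ 2 := by
      have hba : 0 ≤ b - a := by linarith
      nlinarith [mul_le_mul_of_nonneg_left (mul_le_mul H2 H2 hba hd0) hcoef]
    linarith [e1 ▸ le_trans e2 e3]
  have hmain : (1 + ε) * (B * b ^ 2 + A * a ^ 2 - (A + B) * (inner ℝ y₀ y₁ : ℝ))
      ≥ ε * d ^ 2 * S ^ ((ε - 1) / 2) := by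
    have hp : (inner ℝ y₀ y₁ : ℝ) = (a ^ 2 + b ^ 2 - d ^ 2) / 2 := by linarith [hdsq]
    rw [hp]
    have base : B * b ^ 2 + A * a ^ 2 - (A + B) * ((a ^ 2 + b ^ 2 - d ^ 2) / 2)
        = ((A + B) * d ^ 2 - (A - B) * (b ^ 2 - a ^ 2)) / 2 := by ring
    rw [base]
    have h6 : ε * B * d ^ 2 ≤ ((A + B) * d ^ 2 - (A - B) * (b ^ 2 - a ^ 2)) / 2 := by
      nlinarith [step1]
    have h7 : ε * d ^ 2 * S ^ ((ε - 1) / 2) ≤ ε * B * d ^ 2 := by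
      have := mul_le_mul_of_nonneg_left H5 (by positivity : (0:ℝ) ≤ ε * d ^ 2)
      nlinarith [this]
    nlinarith [h6, h7, sq_nonneg d, mul_nonneg (mul_nonneg hε0.le (sq_nonneg d)) H4.le]
  exact hmain

theorem gradF_strong_monotone (N : ℕ) (ε : ℝ) (hε : ε ∈ Ioo (0 : ℝ) 1) :
    ∃ c : ℝ, 0 < c ∧ ∀ y₀ y₁ : EuclideanSpace ℝ (Fin N),
      (inner ℝ
        ((((1 + ε) * (ε ^ 2 + ‖y₁‖ ^ 2) ^ ((ε - 1) / 2)) • y₁)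
          - (((1 + ε) * (ε ^ 2 + ‖y₀‖ ^ 2) ^ ((ε - 1) / 2)) • y₀))
        (y₁ - y₀) : ℝ)
      ≥ c * ‖y₁ - y₀‖ ^ 2 / (ε ^ 2 + ‖y₁‖ ^ 2 + ‖y₀‖ ^ 2) ^ ((1 - ε) / 2) := by
  refine ⟨ε, hε.1, fun y₀ y₁ => ?_⟩
  rcases le_total ‖y₀‖ ‖y₁‖ with h | h
  · exact key_half N ε hε y₀ y₁ h
  · have := key_half N ε hε y₁ y₀ h
    have hsym : (inner ℝ
        ((((1 + ε) * (ε ^ 2 + ‖y₀‖ ^ 2) ^ ((ε - 1) / 2)) • y₀)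
          - (((1 + ε) * (ε ^ 2 + ‖y₁‖ ^ 2) ^ ((ε - 1) / 2)) • y₁))
        (y₀ - y₁) : ℝ)
        = (inner ℝ
        ((((1 + ε) * (ε ^ 2 + ‖y₁‖ ^ 2) ^ ((ε - 1) / 2)) • y₁)
          - (((1 + ε) * (ε ^ 2 + ‖y₀‖ ^ 2) ^ ((ε - 1) / 2)) • y₀))
        (y₁ - y₀) : ℝ) := by
      rw [← neg_sub ((((1 + ε) * (ε ^ 2 + ‖y₁‖ ^ 2) ^ ((ε - 1) / 2)) • y₁)),
        ← neg_sub y₁ y₀, inner_neg_neg]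
    rw [hsym] at this
    have hcomm : (ε ^ 2 + ‖y₀‖ ^ 2 + ‖y₁‖ ^ 2 : ℝ) = ε ^ 2 + ‖y₁‖ ^ 2 + ‖y₀‖ ^ 2 := by ring
    rw [hcomm] at this
    rw [norm_sub_rev] at this
    exact this
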